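/- arXiv:1309.4709 — 3 statements merged into one kernel-verified Lean document; each statement's English description precedes it below -/
import Mathlib

section
/- The Hilbert adjoint of the Douglas–Rachford operator T = T_{V,U} satisfies T* = P_U P_V + P_{U^⊥} P_{V^⊥} = T_{U,V} (the Douglas–Rachford operator with the roles of U and V interchanged); moreover T_{V,U} = T_{V^⊥,U^⊥}. -/
noncomputable section

variable {X : Type*} [NormedAddCommGroup X] [InnerProductSpace ℝ X] [CompleteSpace X]

/-- The orthogonal projection onto a closed subspace `W`, as an operator on `X`. -/
noncomputable def proj (W : Submodule ℝ X) [Submodule.HasOrthogonalProjection W] : X →L[ℝ] X :=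
  W.subtypeL.comp (Submodule.orthogonalProjectionOnto W)

instance infHOP (U V : Submodule ℝ X) [CompleteSpace U] [CompleteSpace V] :
    Submodule.HasOrthogonalProjection (U ⊓ V) := by
  have hU : IsClosed (U : Set X) := (completeSpace_coe_iff_isComplete.mp ‹_›).isClosed
  have hV : IsClosed (V : Set X) := (completeSpace_coe_iff_isComplete.mp ‹_›).isClosed
  have : CompleteSpace (U ⊓ V : Submodule ℝ X) := (hU.inter hV).completeSpace_coe
  infer_instance

/-- The fixed point set `Fix T = {x | T x = x}` of a continuous linear operator `T`,
as a submodule of `X`. -/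
noncomputable def fixedSpace (T : X →L[ℝ] X) : Submodule ℝ X := LinearMap.ker ((T - 1 : X →L[ℝ] X) : X →ₗ[ℝ] X)

instance fixedSpaceHOP (T : X →L[ℝ] X) : Submodule.HasOrthogonalProjection (fixedSpace T) := by
  have h : IsClosed ((fixedSpace T : Submodule ℝ X) : Set X) := by
    have : ((fixedSpace T : Submodule ℝ X) : Set X) = {x | T x = x} := by
      ext x; simp [fixedSpace, LinearMap.mem_ker, sub_eq_zero]
    rw [this]
    exact isClosed_eq T.continuous continuous_id
  have : CompleteSpace (fixedSpace T) := h.completeSpace_coe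
  infer_instance

/-- The reflector `R_W = 2 P_W − Id` associated with `W`. -/
noncomputable def reflector (W : Submodule ℝ X) [Submodule.HasOrthogonalProjection W] : X →L[ℝ] X :=
  2 • proj W - 1

/-- The Douglas–Rachford operator `T = T_{V,U} = P_V (2 P_U − Id) + Id − P_U`.
(The first argument is `U`, the second is `V`.) -/
noncomputable def drOperator (U V : Submodule ℝ X) [Submodule.HasOrthogonalProjection U]
    [Submodule.HasOrthogonalProjection V] : X →L[ℝ] X :=
  proj V * (2 • proj U - 1) + 1 - proj U

/-- The cosine of the Friedrichs angle between `U` and `V`. -/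
noncomputable def friedrichs (U V : Submodule ℝ X) : ℝ :=
  sSup {c : ℝ | ∃ u v : X, u ∈ U ⊓ (U ⊓ V)ᗮ ∧ v ∈ V ⊓ (U ⊓ V)ᗮ ∧
    ‖u‖ ≤ 1 ∧ ‖v‖ ≤ 1 ∧ c = inner ℝ u v}

lemma adj_proj (W : Submodule ℝ X) [CompleteSpace W] :
    ContinuousLinearMap.adjoint (proj W) = proj W :=
  (isSelfAdjoint_starProjection W).adjoint_eq

lemma proj_compl (W : Submodule ℝ X) [CompleteSpace W] :
    proj Wᗮ = 1 - proj W := by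
  ext x
  exact Submodule.starProjection_orthogonal_val x

/-- `T* = P_U P_V + P_{U^⊥} P_{V^⊥} = T_{U,V}`, and `T_{V,U} = T_{V^⊥,U^⊥}`.
Here `drOperator U V = T_{V,U}` so that `T_{U,V} = drOperator V U` and
`T_{V^⊥,U^⊥} = drOperator Uᗮ Vᗮ`. -/
theorem drOperator_adjoint
    (U V : Submodule ℝ X) [CompleteSpace U] [CompleteSpace V] :
    ContinuousLinearMap.adjoint (drOperator U V) = proj U * proj V + proj Uᗮ * proj Vᗮ ∧
    ContinuousLinearMap.adjoint (drOperator U V) = drOperator V U ∧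
    drOperator U V = drOperator Uᗮ Vᗮ := by
  have ha := adj_proj (X := X) U
  have hb := adj_proj (X := X) V
  have hU := proj_compl (X := X) U
  have hV := proj_compl (X := X) V
  have key : ∀ (A B : Submodule ℝ X) [CompleteSpace A] [CompleteSpace B],
      ContinuousLinearMap.adjoint (drOperator A B)
        = proj A * (proj B + proj B) - proj A - proj B + 1 := by
    intro A B _ _
    have h2 : (2 : ℕ) • proj A = proj A + proj A := two_smul ℕ (proj A)
    have hone : ContinuousLinearMap.adjoint (1 : X →L[ℝ] X) = 1 :=
      ContinuousLinearMap.adjoint_id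
    rw [drOperator, h2]
    rw [map_sub, map_add, hone]
    have : ContinuousLinearMap.adjoint (proj B * (proj A + proj A - 1))
        = (proj A + proj A - 1) * proj B := by
      rw [show proj B * (proj A + proj A - 1) = (proj B).comp (proj A + proj A - 1) from rfl,
        ContinuousLinearMap.adjoint_comp, map_sub, map_add, adj_proj, adj_proj, hone]
      rfl
    rw [this, adj_proj]
    noncomm_ring
  refine ⟨?_, ?_, ?_⟩
  · rw [key U V, hU, hV]; noncomm_ring
  · rw [key U V, drOperator]
    have h2 : (2 : ℕ) • proj V = proj V + proj V := two_smul ℕ (proj V)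
    rw [h2]; noncomm_ring
  · rw [drOperator, drOperator, hU, hV,
      show (2:ℕ) • proj U = proj U + proj U from two_smul ℕ (proj U),
      show (2:ℕ) • (1 - proj U) = (1 - proj U) + (1 - proj U) from two_smul ℕ _]
    noncomm_ring
end
end

section
/- The Douglas–Rachford operator T is a normal operator, i.e., T T* = T* T. -/
noncomputable section

variable {X : Type*} [NormedAddCommGroup X] [InnerProductSpace ℝ X] [CompleteSpace X]

lemma drAux {R : Type*} [Ring R] (A B : R) (hA : A*A = A) (hB : B*B = B) :
    (B*(2•A-1)+1-A)*((2•A-1)*B+1-A) = ((2•A-1)*B+1-A)*(B*(2•A-1)+1-A) := by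
  have hA' : ∀ x : R, A*(A*x) = A*x := fun x => by rw [← mul_assoc, hA]
  have hB' : ∀ x : R, B*(B*x) = B*x := fun x => by rw [← mul_assoc, hB]
  noncomm_ring
  simp only [hA', hB', hA, hB]
  abel

lemma proj_idem {X : Type*} [NormedAddCommGroup X] [InnerProductSpace ℝ X] [CompleteSpace X]
    (W : Submodule ℝ X) [CompleteSpace W] : proj W * proj W = proj W := by
  ext x
  simp [proj, Submodule.orthogonalProjectionOnto_mem_subspace_eq_self, Submodule.starProjection_eq_self_iff, Submodule.starProjection_apply_mem]

lemma proj_sa {X : Type*} [NormedAddCommGroup X] [InnerProductSpace ℝ X] [CompleteSpace X]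
    (W : Submodule ℝ X) [CompleteSpace W] : IsSelfAdjoint (proj W) :=
  isSelfAdjoint_starProjection W

/-- the Douglas–Rachford operator `T` is normal: `T T* = T* T`. -/
theorem drOperator_normal
    (U V : Submodule ℝ X) [CompleteSpace U] [CompleteSpace V] :
    drOperator U V * ContinuousLinearMap.adjoint (drOperator U V) =
      ContinuousLinearMap.adjoint (drOperator U V) * drOperator U V := by
  have hA := proj_idem U
  have hB := proj_idem V
  have hadj : ContinuousLinearMap.adjoint (drOperator U V)
      = (2 • proj U - 1) * proj V + 1 - proj U := by
    rw [← ContinuousLinearMap.star_eq_adjoint]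
    unfold drOperator
    simp [star_sub, star_add, star_mul, (proj_sa U).star_eq, (proj_sa V).star_eq]
    noncomm_ring
  rw [hadj]
  unfold drOperator
  exact drAux (proj U) (proj V) hA hB
end
end

section
/- For the Douglas–Rachford operator T, the equality Fix T = U ∩ V holds if and only if the closure of U + V equals X. -/
noncomputable section

variable {X : Type*} [NormedAddCommGroup X] [InnerProductSpace ℝ X] [CompleteSpace X]

lemma proj_apply_mem (W : Submodule ℝ X) [Submodule.HasOrthogonalProjection W] (x : X) :
    proj W x ∈ W := (Submodule.orthogonalProjectionOnto W x).2

lemma sub_proj_mem (W : Submodule ℝ X) [Submodule.HasOrthogonalProjection W] (x : X) :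
    x - proj W x ∈ Wᗮ := Submodule.sub_starProjection_mem_orthogonal x

lemma proj_eq_self (W : Submodule ℝ X) [Submodule.HasOrthogonalProjection W] {x : X} (h : x ∈ W) :
    proj W x = x := Submodule.starProjection_eq_self_iff.mpr h

lemma proj_eq_zero (W : Submodule ℝ X) [Submodule.HasOrthogonalProjection W] {x : X} (h : x ∈ Wᗮ) :
    proj W x = 0 := by
  have := Submodule.orthogonalProjectionOnto_apply_of_mem_orthogonal h
  simp [proj, this]

lemma mem_fixedSpace_iff (U V : Submodule ℝ X) [Submodule.HasOrthogonalProjection U]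
    [Submodule.HasOrthogonalProjection V] (x : X) :
    x ∈ fixedSpace (drOperator U V) ↔ proj U x ∈ V ∧ x - proj U x ∈ Vᗮ := by
  have hmem : x ∈ fixedSpace (drOperator U V) ↔
      proj V (2 • proj U x - x) = proj U x := by
    simp only [fixedSpace, LinearMap.mem_ker, ContinuousLinearMap.coe_coe, ContinuousLinearMap.coe_sub',
      Pi.sub_apply, sub_eq_zero, drOperator, ContinuousLinearMap.sub_apply,
      ContinuousLinearMap.add_apply, ContinuousLinearMap.mul_apply,
      ContinuousLinearMap.one_apply, ContinuousLinearMap.smul_apply,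
      sub_eq_zero, add_sub_right_comm]
    have he : proj V (2 • proj U x - x) - proj U x - x + x
        = proj V (2 • proj U x - x) - proj U x := by abel
    rw [he, sub_eq_zero]
  rw [hmem]
  constructor
  · intro h
    have h1 : proj U x ∈ V := h ▸ proj_apply_mem V _
    have h2 := sub_proj_mem V (2 • proj U x - x)
    rw [h] at h2
    have h3 : 2 • proj U x - x - proj U x = -(x - proj U x) := by
      rw [two_smul]; abel
    rw [h3] at h2
    exact ⟨h1, (Vᗮ.neg_mem_iff).mp h2⟩
  · rintro ⟨h1, h2⟩
    have : (2:ℕ) • proj U x - x = proj U x - (x - proj U x) := by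
      rw [two_smul]; abel
    rw [this, map_sub, proj_eq_self V h1, proj_eq_zero V h2, sub_zero]

/-- `Fix T = U ∩ V` if and only if the closure of `U + V` equals `X`. -/
theorem fixedSpace_eq_inf_iff_dense_sum
    (U V : Submodule ℝ X) [CompleteSpace U] [CompleteSpace V] :
    fixedSpace (drOperator U V) = U ⊓ V ↔ (U ⊔ V).topologicalClosure = ⊤ := by
  rw [Submodule.topologicalClosure_eq_top_iff, ← Submodule.inf_orthogonal]
  constructor
  · intro h
    rw [Submodule.eq_bot_iff]
    rintro x ⟨hxU, hxV⟩
    have hx : x ∈ fixedSpace (drOperator U V) := by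
      rw [mem_fixedSpace_iff]
      rw [proj_eq_zero U hxU]
      simpa using hxV
    rw [h] at hx
    exact inner_self_eq_zero.mp (hxU x hx.1)
  · intro h
    ext x
    rw [mem_fixedSpace_iff]
    constructor
    · rintro ⟨h1, h2⟩
      have hu : x - proj U x ∈ Uᗮ ⊓ Vᗮ := ⟨sub_proj_mem U x, h2⟩
      rw [h] at hu
      have hx : proj U x = x := (sub_eq_zero.mp ((Submodule.mem_bot ℝ).mp hu)).symm
      exact hx ▸ (⟨proj_apply_mem U x, h1⟩ : proj U x ∈ U ⊓ V)
    · rintro ⟨h1, h2⟩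
      exact ⟨by rwa [proj_eq_self U h1], by rw [proj_eq_self U h1]; simp⟩
end
end
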